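/- Fix d, m, n ∈ ℕ, constants C1, C3, C4 > 0, L > 0, and an L-Lipschitz function h : ℝ → ℝ. Let F = {x ↦ Σ_{j=1}^m α_j h(⟨w_j, x⟩) : α ∈ ℝ^m, ‖α‖₂ ≤ C4, w_j ∈ ℝ^d, ‖w_j‖₂ ≤ C3 for all j}. Then for any points x_1,…,x_n ∈ ℝ^d with ‖x_i‖₂ ≤ C1 for all i, the empirical Rademacher complexity satisfies R̂_n(F) ≤ 2 L C1 C3 C4 √m / √n + C4 |h(0)| √m / √n. -/

import Mathlib

open RealInnerProductSpace

/-- (One-sided) empirical Rademacher complexity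
`R̂_n(F) = 2^{-n} Σ_{σ ∈ {−1,1}^n} sup_{f ∈ F} (1/n) Σ_i σ_i f (x i)`. -/
noncomputable def radEmp {α : Type*} {n : ℕ} (F : Set (α → ℝ)) (x : Fin n → α) : ℝ :=
  (2 ^ n : ℝ)⁻¹ * ∑ σ : Fin n → Bool,
    sSup {r : ℝ | ∃ f ∈ F, r = (n : ℝ)⁻¹ * ∑ i, (if σ i then (1 : ℝ) else -1) * f (x i)}

noncomputable def sgn (b : Bool) : ℝ := if b then 1 else -1

lemma sgn_abs (b : Bool) : |sgn b| = 1 := by cases b <;> simp [sgn]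

lemma sgn_not (b : Bool) : sgn (!b) = -sgn b := by cases b <;> simp [sgn]

lemma sgn_mul_self (b : Bool) : sgn b * sgn b = 1 := by cases b <;> norm_num [sgn]

lemma flip_invol {n : ℕ} (a : Fin n) :
    Function.Involutive (fun σ : Fin n → Bool => Function.update σ a (!σ a)) := by
  intro σ
  funext j
  rcases eq_or_ne j a with rfl | hj
  · simp
  · simp [Function.update_of_ne hj]

lemma sum_sgn_mul_sgn {n : ℕ} {i k : Fin n} (hik : i ≠ k) :
    ∑ σ : Fin n → Bool, sgn (σ i) * sgn (σ k) = 0 := by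
  refine Finset.sum_involution (fun σ _ => Function.update σ i (!σ i)) ?_ ?_
    (fun σ _ => Finset.mem_univ _) (fun σ _ => flip_invol i σ)
  · intro σ _
    simp [Function.update_of_ne hik.symm, sgn_not]
  · intro σ _ hne hEq
    have := congrFun hEq i
    simp at this

lemma sum_sgn_sq {n : ℕ} (i : Fin n) :
    ∑ σ : Fin n → Bool, sgn (σ i) * sgn (σ i) = 2 ^ n := by
  simp only [sgn_mul_self]
  simp [Finset.card_univ]

lemma sum_norm_sq_sgn {F : Type*} [NormedAddCommGroup F] [InnerProductSpace ℝ F] {n : ℕ}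
    (v : Fin n → F) :
    ∑ σ : Fin n → Bool, ‖∑ i, sgn (σ i) • v i‖ ^ 2 = 2 ^ n * ∑ i, ‖v i‖ ^ 2 := by
  have expand : ∀ σ : Fin n → Bool, ‖∑ i, sgn (σ i) • v i‖ ^ 2
      = ∑ i, ∑ k, (sgn (σ i) * sgn (σ k)) * ⟪v i, v k⟫ := by
    intro σ
    rw [← real_inner_self_eq_norm_sq, sum_inner]
    refine Finset.sum_congr rfl fun i _ => ?_
    rw [inner_sum]
    refine Finset.sum_congr rfl fun k _ => ?_
    rw [real_inner_smul_left, real_inner_smul_right]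
    ring
  simp only [expand]
  rw [Finset.sum_comm]
  have : ∀ i : Fin n, ∑ σ : Fin n → Bool, ∑ k, (sgn (σ i) * sgn (σ k)) * ⟪v i, v k⟫
      = 2 ^ n * ‖v i‖ ^ 2 := by
    intro i
    rw [Finset.sum_comm]
    have key : ∀ k : Fin n, ∑ σ : Fin n → Bool, (sgn (σ i) * sgn (σ k)) * ⟪v i, v k⟫
        = (if i = k then (2:ℝ) ^ n else 0) * ⟪v i, v k⟫ := by
      intro k
      rw [← Finset.sum_mul]
      rcases eq_or_ne i k with rfl | hik
      · rw [sum_sgn_sq i]; simp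
      · rw [sum_sgn_mul_sgn hik]; simp [hik]
    simp only [key]
    simp [ite_mul, real_inner_self_eq_norm_sq]
  simp only [this]
  rw [← Finset.mul_sum]

lemma sum_norm_sgn_le {F : Type*} [NormedAddCommGroup F] [InnerProductSpace ℝ F] {n : ℕ}
    (v : Fin n → F) (C : ℝ) (hC : 0 ≤ C) (hv : ∀ i, ‖v i‖ ≤ C) :
    ∑ σ : Fin n → Bool, ‖∑ i, sgn (σ i) • v i‖ ≤ 2 ^ n * C * Real.sqrt n := by
  have h1 : (∑ σ : Fin n → Bool, ‖∑ i, sgn (σ i) • v i‖) ^ 2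
      ≤ 2 ^ n * (2 ^ n * (n * C ^ 2)) := by
    calc (∑ σ : Fin n → Bool, ‖∑ i, sgn (σ i) • v i‖) ^ 2
        = (∑ σ : Fin n → Bool, 1 * ‖∑ i, sgn (σ i) • v i‖) ^ 2 := by simp
      _ ≤ (∑ _σ : Fin n → Bool, (1:ℝ) ^ 2) * ∑ σ : Fin n → Bool, ‖∑ i, sgn (σ i) • v i‖ ^ 2 :=
          Finset.sum_mul_sq_le_sq_mul_sq _ _ _
      _ ≤ 2 ^ n * (2 ^ n * (n * C ^ 2)) := by
          rw [sum_norm_sq_sgn v]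
          gcongr
          · simp [Finset.card_univ]
          · have : ∑ i, ‖v i‖ ^ 2 ≤ ∑ _i : Fin n, C ^ 2 :=
              Finset.sum_le_sum fun i _ => pow_le_pow_left₀ (norm_nonneg _) (hv i) 2
            calc ∑ i, ‖v i‖ ^ 2 ≤ ∑ _i : Fin n, C ^ 2 := this
              _ = n * C ^ 2 := by simp [Finset.card_univ, mul_comm]
  have h2 : (0:ℝ) ≤ ∑ σ : Fin n → Bool, ‖∑ i, sgn (σ i) • v i‖ :=
    Finset.sum_nonneg fun _ _ => norm_nonneg _
  have hb : (0:ℝ) ≤ 2 ^ n * C * Real.sqrt n :=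
    mul_nonneg (mul_nonneg (by positivity) hC) (Real.sqrt_nonneg _)
  have hb2 : (2 ^ n * C * Real.sqrt n) ^ 2 = 2 ^ n * (2 ^ n * (n * C ^ 2)) := by
    rw [mul_pow, mul_pow, Real.sq_sqrt (Nat.cast_nonneg n)]; ring
  calc ∑ σ : Fin n → Bool, ‖∑ i, sgn (σ i) • v i‖
      = Real.sqrt ((∑ σ : Fin n → Bool, ‖∑ i, sgn (σ i) • v i‖) ^ 2) := (Real.sqrt_sq h2).symm
    _ ≤ Real.sqrt ((2 ^ n * C * Real.sqrt n) ^ 2) := Real.sqrt_le_sqrt (by rw [hb2]; exact h1)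
    _ = 2 ^ n * C * Real.sqrt n := Real.sqrt_sq hb

lemma bddAbove_image_of {E : Type*} {K : Set E} {f : E → ℝ} {B : ℝ}
    (h : ∀ w ∈ K, f w ≤ B) : BddAbove (f '' K) := by
  refine ⟨B, ?_⟩
  rintro r ⟨w, hw, rfl⟩
  exact h w hw

lemma key_step {E : Type*} {K : Set E} (hK : K.Nonempty) (φ t R : E → ℝ)
    (h3 : BddAbove ((fun w => t w + R w) '' K))
    (h4 : BddAbove ((fun w => -t w + R w) '' K))
    (hlip : ∀ w ∈ K, ∀ w' ∈ K, |φ w - φ w'| ≤ |t w - t w'|) :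
    sSup ((fun w => φ w + R w) '' K) + sSup ((fun w => -φ w + R w) '' K)
      ≤ sSup ((fun w => t w + R w) '' K) + sSup ((fun w => -t w + R w) '' K) := by
  refine le_of_forall_pos_le_add fun ε hε => ?_
  have hne1 : ((fun w => φ w + R w) '' K).Nonempty := hK.image _
  have hne2 : ((fun w => -φ w + R w) '' K).Nonempty := hK.image _
  obtain ⟨r1, ⟨w1, hw1, rfl⟩, hr1⟩ :=
    exists_lt_of_lt_csSup hne1 (by linarith : sSup ((fun w => φ w + R w) '' K) - ε/2
      < sSup ((fun w => φ w + R w) '' K))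
  obtain ⟨r2, ⟨w2, hw2, rfl⟩, hr2⟩ :=
    exists_lt_of_lt_csSup hne2 (by linarith : sSup ((fun w => -φ w + R w) '' K) - ε/2
      < sSup ((fun w => -φ w + R w) '' K))
  have hd := hlip w1 hw1 w2 hw2
  rcases le_total (t w2) (t w1) with hcase | hcase
  · have e1 : t w1 + R w1 ≤ sSup ((fun w => t w + R w) '' K) :=
      le_csSup h3 ⟨w1, hw1, rfl⟩
    have e2 : -t w2 + R w2 ≤ sSup ((fun w => -t w + R w) '' K) :=
      le_csSup h4 ⟨w2, hw2, rfl⟩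
    have habs : |t w1 - t w2| = t w1 - t w2 := abs_of_nonneg (by linarith)
    rw [habs] at hd
    have : φ w1 - φ w2 ≤ t w1 - t w2 := le_trans (le_abs_self _) hd
    linarith
  · have e1 : t w2 + R w2 ≤ sSup ((fun w => t w + R w) '' K) :=
      le_csSup h3 ⟨w2, hw2, rfl⟩
    have e2 : -t w1 + R w1 ≤ sSup ((fun w => -t w + R w) '' K) :=
      le_csSup h4 ⟨w1, hw1, rfl⟩
    have habs : |t w1 - t w2| = t w2 - t w1 := by
      rw [abs_of_nonpos (by linarith), neg_sub]
    rw [habs] at hd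
    have : φ w1 - φ w2 ≤ t w2 - t w1 := le_trans (le_abs_self _) hd
    linarith

noncomputable def cexpr {E : Type*} {n : ℕ} (φ t : Fin n → E → ℝ)
    (s : Finset (Fin n)) (σ : Fin n → Bool) (w : E) : ℝ :=
  ∑ i ∈ s, sgn (σ i) * φ i w + ∑ i ∈ sᶜ, sgn (σ i) * t i w

lemma cexpr_step {E : Type*} {n : ℕ} {K : Set E} {w0 : E} (hK0 : w0 ∈ K)
    (φ t : Fin n → E → ℝ) (M : ℝ)
    (hφ : ∀ i, ∀ w ∈ K, |φ i w| ≤ M) (ht : ∀ i, ∀ w ∈ K, |t i w| ≤ M)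
    (hlip : ∀ i, ∀ w ∈ K, ∀ w' ∈ K, |φ i w - φ i w'| ≤ |t i w - t i w'|)
    (a : Fin n) (s : Finset (Fin n)) (ha : a ∉ s) :
    ∑ σ : Fin n → Bool, sSup (cexpr φ t (insert a s) σ '' K)
      ≤ ∑ σ : Fin n → Bool, sSup (cexpr φ t s σ '' K) := by
  classical
  have hK : K.Nonempty := ⟨w0, hK0⟩
  have hM0 : 0 ≤ M := le_trans (abs_nonneg _) (hφ a w0 hK0)
  set R : (Fin n → Bool) → E → ℝ :=
    fun σ w => ∑ i ∈ s, sgn (σ i) * φ i w + ∑ i ∈ sᶜ.erase a, sgn (σ i) * t i w with hR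
  have habs : ∀ (u : Finset (Fin n)) (f : Fin n → E → ℝ), (∀ i, ∀ w ∈ K, |f i w| ≤ M) →
      ∀ (σ : Fin n → Bool) (w : E), w ∈ K → |∑ i ∈ u, sgn (σ i) * f i w| ≤ n * M := by
    intro u f hf σ w hw
    calc |∑ i ∈ u, sgn (σ i) * f i w| ≤ ∑ i ∈ u, |sgn (σ i) * f i w| :=
          Finset.abs_sum_le_sum_abs _ _
      _ = ∑ i ∈ u, |f i w| := by simp [abs_mul, sgn_abs]
      _ ≤ ∑ i ∈ u, M := Finset.sum_le_sum fun i _ => hf i w hw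
      _ = u.card * M := by simp [Finset.sum_const, nsmul_eq_mul]
      _ ≤ n * M := by
          have hc : (u.card : ℝ) ≤ n := by
            exact_mod_cast le_trans (Finset.card_le_univ u) (le_of_eq (by simp))
          exact mul_le_mul_of_nonneg_right hc hM0
  have hRb : ∀ (σ : Fin n → Bool) (w : E), w ∈ K → |R σ w| ≤ n * M + n * M := by
    intro σ w hw
    refine le_trans (abs_add_le _ _) (add_le_add ?_ ?_)
    · exact habs s φ hφ σ w hw
    · exact habs (sᶜ.erase a) t ht σ w hw
  -- decompositions
  have hdec1 : ∀ (σ : Fin n → Bool), cexpr φ t (insert a s) σ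
      = fun w => sgn (σ a) * φ a w + R σ w := by
    intro σ
    funext w
    simp only [cexpr, Finset.compl_insert, hR]
    rw [Finset.sum_insert ha]
    ring
  have hdec2 : ∀ (σ : Fin n → Bool), cexpr φ t s σ
      = fun w => sgn (σ a) * t a w + R σ w := by
    intro σ
    funext w
    simp only [cexpr, hR]
    rw [← Finset.add_sum_erase _ _ (Finset.mem_compl.mpr ha)]
    ring
  set flip : (Fin n → Bool) → (Fin n → Bool) :=
    fun σ => Function.update σ a (!σ a) with hflip
  have hflipR : ∀ σ, R (flip σ) = R σ := by
    intro σ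
    funext w
    simp only [hR]
    congr 1
    · refine Finset.sum_congr rfl fun i hi => ?_
      have : i ≠ a := fun hia => ha (hia ▸ hi)
      rw [hflip]; simp [Function.update_of_ne this]
    · refine Finset.sum_congr rfl fun i hi => ?_
      have : i ≠ a := Finset.ne_of_mem_erase hi
      rw [hflip]; simp [Function.update_of_ne this]
  have hflipa : ∀ σ, sgn (flip σ a) = - sgn (σ a) := by
    intro σ; rw [hflip]; simp [sgn_not]
  have hbdd1 : ∀ σ, BddAbove ((fun w => t a w + R σ w) '' K) := by
    intro σ
    refine bddAbove_image_of (B := M + (n * M + n * M)) fun w hw => ?_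
    have h1 := (abs_le.mp (ht a w hw)).2
    have h2 := (abs_le.mp (hRb σ w hw)).2
    linarith
  have hbdd2 : ∀ σ, BddAbove ((fun w => -t a w + R σ w) '' K) := by
    intro σ
    refine bddAbove_image_of (B := M + (n * M + n * M)) fun w hw => ?_
    have h1 := (abs_le.mp (ht a w hw)).1
    have h2 := (abs_le.mp (hRb σ w hw)).2
    linarith
  have pair : ∀ σ : Fin n → Bool,
      sSup (cexpr φ t (insert a s) σ '' K) + sSup (cexpr φ t (insert a s) (flip σ) '' K)
        ≤ sSup (cexpr φ t s σ '' K) + sSup (cexpr φ t s (flip σ) '' K) := by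
    intro σ
    rw [hdec1 σ, hdec1 (flip σ), hdec2 σ, hdec2 (flip σ), hflipR σ, hflipa σ]
    cases hσa : σ a
    · have hs : sgn false = -1 := by simp [sgn]
      rw [hs]
      have e1 : (fun w => (-1 : ℝ) * φ a w + R σ w) = fun w => -(φ a w) + R σ w := by
        funext w; ring
      have e2 : (fun w => -(-1 : ℝ) * φ a w + R σ w) = fun w => φ a w + R σ w := by
        funext w; ring
      have e3 : (fun w => (-1 : ℝ) * t a w + R σ w) = fun w => -(t a w) + R σ w := by
        funext w; ring
      have e4 : (fun w => -(-1 : ℝ) * t a w + R σ w) = fun w => t a w + R σ w := by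
        funext w; ring
      rw [e1, e2, e3, e4, add_comm (sSup ((fun w => -(φ a w) + R σ w) '' K)),
        add_comm (sSup ((fun w => -(t a w) + R σ w) '' K))]
      exact key_step hK (φ a) (t a) (R σ) (hbdd1 σ) (hbdd2 σ) (hlip a)
    · have hs : sgn true = 1 := by simp [sgn]
      rw [hs]
      have e1 : (fun w => (1 : ℝ) * φ a w + R σ w) = fun w => φ a w + R σ w := by
        funext w; ring
      have e2 : (fun w => -(1 : ℝ) * φ a w + R σ w) = fun w => -(φ a w) + R σ w := by
        funext w; ring
      have e3 : (fun w => (1 : ℝ) * t a w + R σ w) = fun w => t a w + R σ w := by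
        funext w; ring
      have e4 : (fun w => -(1 : ℝ) * t a w + R σ w) = fun w => -(t a w) + R σ w := by
        funext w; ring
      rw [e1, e2, e3, e4]
      exact key_step hK (φ a) (t a) (R σ) (hbdd1 σ) (hbdd2 σ) (hlip a)
  -- summation via the involution
  have hinv : Function.Involutive flip := flip_invol a
  have hsum : ∀ (F : (Fin n → Bool) → ℝ),
      ∑ σ : Fin n → Bool, F (flip σ) = ∑ σ : Fin n → Bool, F σ :=
    fun F => Fintype.sum_bijective flip hinv.bijective (fun σ => F (flip σ)) F (fun σ => rfl)
  have hsum2 := Finset.sum_le_sum (fun σ (_ : σ ∈ Finset.univ) => pair σ)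
  rw [Finset.sum_add_distrib, Finset.sum_add_distrib,
    hsum (fun σ => sSup (cexpr φ t (insert a s) σ '' K)),
    hsum (fun σ => sSup (cexpr φ t s σ '' K))] at hsum2
  linarith

lemma contraction {E : Type*} {n : ℕ} {K : Set E} {w0 : E} (hK0 : w0 ∈ K)
    (φ t : Fin n → E → ℝ) (M : ℝ)
    (hφ : ∀ i, ∀ w ∈ K, |φ i w| ≤ M) (ht : ∀ i, ∀ w ∈ K, |t i w| ≤ M)
    (hlip : ∀ i, ∀ w ∈ K, ∀ w' ∈ K, |φ i w - φ i w'| ≤ |t i w - t i w'|) :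
    ∑ σ : Fin n → Bool, sSup ((fun w => ∑ i, sgn (σ i) * φ i w) '' K)
      ≤ ∑ σ : Fin n → Bool, sSup ((fun w => ∑ i, sgn (σ i) * t i w) '' K) := by
  classical
  have main : ∀ s : Finset (Fin n),
      ∑ σ : Fin n → Bool, sSup (cexpr φ t s σ '' K)
        ≤ ∑ σ : Fin n → Bool, sSup (cexpr φ t ∅ σ '' K) := by
    intro s
    induction s using Finset.induction_on with
    | empty => exact le_refl _
    | insert _ _ ha ih => exact le_trans (cexpr_step hK0 φ t M hφ ht hlip _ _ ha) ih
  have h1 : ∀ σ : Fin n → Bool, cexpr φ t Finset.univ σ = fun w => ∑ i, sgn (σ i) * φ i w := by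
    intro σ; funext w; simp [cexpr]
  have h2 : ∀ σ : Fin n → Bool, cexpr φ t ∅ σ = fun w => ∑ i, sgn (σ i) * t i w := by
    intro σ; funext w; simp [cexpr]
  have hmain := main Finset.univ
  simp only [h1, h2] at hmain
  exact hmain

/-- paper's Lemma 3. For the one-hidden-layer class
`F = {x ↦ Σ_j α_j h(⟨w_j, x⟩) : ‖α‖₂ ≤ C4, ‖w_j‖₂ ≤ C3}` with `L`-Lipschitz activation `h`,
and sample points of norm at most `C1`,
`R̂_n(F) ≤ 2 L C1 C3 C4 √m/√n + C4 |h(0)| √m/√n`. -/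
theorem stmt_2 {d m n : ℕ} (hn : 0 < n) (C1 C3 C4 L : ℝ)
    (hC1 : 0 < C1) (hC3 : 0 < C3) (hC4 : 0 < C4) (hL : 0 < L)
    (h : ℝ → ℝ) (hLip : LipschitzWith L.toNNReal h)
    (x : Fin n → EuclideanSpace ℝ (Fin d)) (hx : ∀ i, ‖x i‖ ≤ C1) :
    radEmp {f | ∃ (α : EuclideanSpace ℝ (Fin m)) (w : Fin m → EuclideanSpace ℝ (Fin d)),
        ‖α‖ ≤ C4 ∧ (∀ j, ‖w j‖ ≤ C3) ∧ f = fun y => ∑ j, α j * h ⟪w j, y⟫} x ≤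
      2 * L * C1 * C3 * C4 * Real.sqrt m / Real.sqrt n
        + C4 * |h 0| * Real.sqrt m / Real.sqrt n := by
  classical
  set K : Set (EuclideanSpace ℝ (Fin d)) := Metric.closedBall 0 C3 with hKdef
  have hK0 : (0 : EuclideanSpace ℝ (Fin d)) ∈ K := Metric.mem_closedBall_self hC3.le
  have hKmem : ∀ w : EuclideanSpace ℝ (Fin d), ‖w‖ ≤ C3 → w ∈ K := fun w hw => mem_closedBall_zero_iff.mpr hw
  have hKnorm : ∀ w ∈ K, ‖w‖ ≤ C3 := fun w hw => mem_closedBall_zero_iff.mp hw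
  have hLR : ∀ a b : ℝ, |h a - h b| ≤ L * |a - b| := by
    intro a b
    have := hLip.dist_le_mul a b
    rwa [Real.dist_eq, Real.dist_eq, Real.coe_toNNReal L hL.le] at this
  have hinner : ∀ (i : Fin n), ∀ w ∈ K, |⟪w, x i⟫| ≤ C3 * C1 := by
    intro i w hw
    exact le_trans (abs_real_inner_le_norm w (x i))
      (mul_le_mul (hKnorm w hw) (hx i) (norm_nonneg _) hC3.le)
  -- abs-of-sum helper
  have habs : ∀ (f : Fin n → EuclideanSpace ℝ (Fin d) → ℝ) (M' : ℝ), (∀ i, ∀ w ∈ K, |f i w| ≤ M') →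
      ∀ (σ : Fin n → Bool), ∀ w ∈ K, |∑ i, sgn (σ i) * f i w| ≤ n * M' := by
    intro f M' hf σ w hw
    calc |∑ i, sgn (σ i) * f i w| ≤ ∑ i, |sgn (σ i) * f i w| := Finset.abs_sum_le_sum_abs _ _
      _ = ∑ i, |f i w| := by simp [abs_mul, sgn_abs]
      _ ≤ ∑ _i : Fin n, M' := Finset.sum_le_sum fun i _ => hf i w hw
      _ = n * M' := by simp [Finset.sum_const, nsmul_eq_mul]
  set M0 : ℝ := |h 0| + L * (C3 * C1) with hM0def
  have hh_bd : ∀ (i : Fin n), ∀ w ∈ K, |h ⟪w, x i⟫| ≤ M0 := by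
    intro i w hw
    have h1 : |h ⟪w, x i⟫ - h 0| ≤ L * (C3 * C1) := by
      calc |h ⟪w, x i⟫ - h 0| ≤ L * |⟪w, x i⟫ - 0| := hLR _ _
        _ = L * |⟪w, x i⟫| := by rw [sub_zero]
        _ ≤ L * (C3 * C1) := mul_le_mul_of_nonneg_left (hinner i w hw) hL.le
    calc |h ⟪w, x i⟫| ≤ |h 0| + |h ⟪w, x i⟫ - h 0| := by
          have := abs_sub_abs_le_abs_sub (h ⟪w, x i⟫) (h 0)
          have h2 := abs_add_le (h 0) (h ⟪w, x i⟫ - h 0)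
          simpa using h2
      _ ≤ M0 := by rw [hM0def]; linarith
  have hg_bd : ∀ (i : Fin n), ∀ w ∈ K, |h ⟪w, x i⟫ - h 0| ≤ L * (C3 * C1) := by
    intro i w hw
    calc |h ⟪w, x i⟫ - h 0| ≤ L * |⟪w, x i⟫ - 0| := hLR _ _
      _ = L * |⟪w, x i⟫| := by rw [sub_zero]
      _ ≤ L * (C3 * C1) := mul_le_mul_of_nonneg_left (hinner i w hw) hL.le
  have ht_bd : ∀ (i : Fin n), ∀ w ∈ K, |L * ⟪w, x i⟫| ≤ L * (C3 * C1) := by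
    intro i w hw
    rw [abs_mul, abs_of_pos hL]
    exact mul_le_mul_of_nonneg_left (hinner i w hw) hL.le
  -- main per-σ quantities
  set b : (Fin n → Bool) → EuclideanSpace ℝ (Fin d) → ℝ := fun σ w => ∑ i, sgn (σ i) * h ⟪w, x i⟫ with hbdef
  set B : (Fin n → Bool) → ℝ := fun σ => sSup ((fun w => |b σ w|) '' K) with hBdef
  set G : (Fin n → Bool) → ℝ :=
    fun σ => sSup ((fun w => |∑ i, sgn (σ i) * (h ⟪w, x i⟫ - h 0)|) '' K) with hGdef
  set P : (Fin n → Bool) → ℝ :=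
    fun σ => sSup ((fun w => ∑ i, sgn (σ i) * (h ⟪w, x i⟫ - h 0)) '' K) with hPdef
  set Q : (Fin n → Bool) → ℝ :=
    fun σ => sSup ((fun w => ∑ i, sgn (σ i) * (L * ⟪w, x i⟫)) '' K) with hQdef
  set T : (Fin n → Bool) → ℝ := fun σ => |∑ i, sgn (σ i)| with hTdef
  set N : (Fin n → Bool) → ℝ := fun σ => ‖∑ i, sgn (σ i) • x i‖ with hNdef
  -- boundedness facts
  have hbB : ∀ σ : Fin n → Bool, BddAbove ((fun w => |b σ w|) '' K) :=
    fun σ => bddAbove_image_of fun w hw => habs (fun i w => h ⟪w, x i⟫) M0 hh_bd σ w hw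
  have hbG : ∀ σ : Fin n → Bool, BddAbove ((fun w => |∑ i, sgn (σ i) * (h ⟪w, x i⟫ - h 0)|) '' K) :=
    fun σ => bddAbove_image_of fun w hw =>
      habs (fun i w => h ⟪w, x i⟫ - h 0) (L * (C3 * C1)) hg_bd σ w hw
  have hbP : ∀ σ : Fin n → Bool, BddAbove ((fun w => ∑ i, sgn (σ i) * (h ⟪w, x i⟫ - h 0)) '' K) :=
    fun σ => bddAbove_image_of fun w hw => le_trans (le_abs_self _)
      (habs (fun i w => h ⟪w, x i⟫ - h 0) (L * (C3 * C1)) hg_bd σ w hw)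
  -- nonnegativity
  have hBnn : ∀ σ : Fin n → Bool, 0 ≤ B σ := by
    intro σ
    exact le_trans (abs_nonneg (b σ 0)) (le_csSup (hbB σ) ⟨0, hK0, rfl⟩)
  have hPzero : ∀ σ : Fin n → Bool, (fun w => ∑ i, sgn (σ i) * (h ⟪w, x i⟫ - h 0)) 0 = 0 := by
    intro σ; simp
  have hPnn : ∀ σ : Fin n → Bool, 0 ≤ P σ := by
    intro σ
    exact le_csSup (hbP σ) ⟨0, hK0, hPzero σ⟩
  -- Step (a)
  have hstepA : ∀ σ : Fin n → Bool,
      sSup {r : ℝ | ∃ f ∈ {f | ∃ (α : EuclideanSpace ℝ (Fin m))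
          (w : Fin m → EuclideanSpace ℝ (Fin d)), ‖α‖ ≤ C4 ∧ (∀ j, ‖w j‖ ≤ C3)
          ∧ f = fun y => ∑ j, α j * h ⟪w j, y⟫},
        r = (n : ℝ)⁻¹ * ∑ i, sgn (σ i) * f (x i)}
      ≤ (n : ℝ)⁻¹ * (C4 * (Real.sqrt m * B σ)) := by
    intro σ
    apply csSup_le
    · refine ⟨(n : ℝ)⁻¹ * ∑ i, sgn (σ i) * (fun y : EuclideanSpace ℝ (Fin d) => ∑ _j : Fin m, (0:ℝ) * h ⟪(0:EuclideanSpace ℝ (Fin d)), y⟫) (x i),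
        ⟨fun y => ∑ _j : Fin m, (0:ℝ) * h ⟪(0:EuclideanSpace ℝ (Fin d)), y⟫, ⟨0, fun _ => 0, ?_, ?_, ?_⟩, rfl⟩⟩
      · simp [hC4.le]
      · intro j; simp [hC3.le]
      · funext y; simp
    · rintro r ⟨f, ⟨α, w, hα, hw, rfl⟩, rfl⟩
      have hswap : ∑ i, sgn (σ i) * ∑ j, α j * h ⟪w j, x i⟫ = ∑ j, α j * b σ (w j) := by
        calc ∑ i, sgn (σ i) * ∑ j, α j * h ⟪w j, x i⟫
            = ∑ i, ∑ j, α j * (sgn (σ i) * h ⟪w j, x i⟫) := by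
              refine Finset.sum_congr rfl fun i _ => ?_
              rw [Finset.mul_sum]
              exact Finset.sum_congr rfl fun j _ => by ring
          _ = ∑ j, α j * b σ (w j) := by
              rw [Finset.sum_comm]
              exact Finset.sum_congr rfl fun j _ => by rw [hbdef, Finset.mul_sum]
      have hbj : ∀ j, |b σ (w j)| ≤ B σ :=
        fun j => le_csSup (hbB σ) ⟨w j, hKmem (w j) (hw j), rfl⟩
      have hCS : ∑ j, α j * b σ (w j) ≤ C4 * (Real.sqrt m * B σ) := by
        have hnorm : ∑ j, (α j) ^ 2 = ‖α‖ ^ 2 := by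
          rw [EuclideanSpace.norm_eq,
            Real.sq_sqrt (Finset.sum_nonneg fun j _ => by positivity)]
          exact Finset.sum_congr rfl fun j _ => by rw [Real.norm_eq_abs, sq_abs]
        have halpha : ∑ j, (α j) ^ 2 ≤ C4 ^ 2 := by
          rw [hnorm]
          exact pow_le_pow_left₀ (norm_nonneg _) hα 2
        have hbsum : ∑ j, (b σ (w j)) ^ 2 ≤ m * B σ ^ 2 := by
          have h1 : ∑ j, (b σ (w j)) ^ 2 ≤ ∑ _j : Fin m, B σ ^ 2 := by
            refine Finset.sum_le_sum fun j _ => ?_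
            rw [← sq_abs]
            exact pow_le_pow_left₀ (abs_nonneg _) (hbj j) 2
          have h2 : ∑ _j : Fin m, B σ ^ 2 = m * B σ ^ 2 := by
            simp [Finset.sum_const, nsmul_eq_mul]
          linarith
        have hsq : (∑ j, α j * b σ (w j)) ^ 2 ≤ (C4 * (Real.sqrt m * B σ)) ^ 2 := by
          have hcs := Finset.sum_mul_sq_le_sq_mul_sq Finset.univ (fun j => α j)
            (fun j => b σ (w j))
          have heq : (C4 * (Real.sqrt m * B σ)) ^ 2 = C4 ^ 2 * (m * B σ ^ 2) := by
            rw [mul_pow, mul_pow, Real.sq_sqrt (Nat.cast_nonneg m)]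
          have hstep : (∑ j, (α j) ^ 2) * ∑ j, (b σ (w j)) ^ 2 ≤ C4 ^ 2 * (m * B σ ^ 2) := by
            exact mul_le_mul halpha hbsum (Finset.sum_nonneg fun j _ => sq_nonneg _)
              (sq_nonneg C4)
          rw [heq]
          exact le_trans hcs hstep
        have hrhs : 0 ≤ C4 * (Real.sqrt m * B σ) :=
          mul_nonneg hC4.le (mul_nonneg (Real.sqrt_nonneg _) (hBnn σ))
        calc ∑ j, α j * b σ (w j) ≤ |∑ j, α j * b σ (w j)| := le_abs_self _
          _ = Real.sqrt ((∑ j, α j * b σ (w j)) ^ 2) := (Real.sqrt_sq_eq_abs _).symm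
          _ ≤ Real.sqrt ((C4 * (Real.sqrt m * B σ)) ^ 2) := Real.sqrt_le_sqrt hsq
          _ = C4 * (Real.sqrt m * B σ) := Real.sqrt_sq hrhs
      rw [hswap]
      exact mul_le_mul_of_nonneg_left hCS (by positivity)
  -- Step (b)
  have hstepB : ∀ σ : Fin n → Bool, B σ ≤ G σ + |h 0| * T σ := by
    intro σ
    apply csSup_le (Set.Nonempty.image _ ⟨0, hK0⟩)
    rintro r ⟨w, hw, rfl⟩
    dsimp only
    have hid : b σ w = (∑ i, sgn (σ i) * (h ⟪w, x i⟫ - h 0)) + h 0 * ∑ i, sgn (σ i) := by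
      rw [hbdef, Finset.mul_sum, ← Finset.sum_add_distrib]
      exact Finset.sum_congr rfl fun i _ => by ring
    calc |b σ w| ≤ |∑ i, sgn (σ i) * (h ⟪w, x i⟫ - h 0)| + |h 0| * |∑ i, sgn (σ i)| := by
          rw [hid]
          exact le_trans (abs_add_le _ _) (by rw [abs_mul])
      _ ≤ G σ + |h 0| * T σ := by
          refine add_le_add (le_csSup (hbG σ) ⟨w, hw, rfl⟩) ?_
          rw [hTdef]
  -- Step (c)
  have hstepC : ∀ σ : Fin n → Bool, G σ ≤ P σ + P (fun i => !(σ i)) := by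
    intro σ
    apply csSup_le (Set.Nonempty.image _ ⟨0, hK0⟩)
    rintro r ⟨w, hw, rfl⟩
    dsimp only
    have h1 : ∑ i, sgn (σ i) * (h ⟪w, x i⟫ - h 0) ≤ P σ := le_csSup (hbP σ) ⟨w, hw, rfl⟩
    have h2 : -(∑ i, sgn (σ i) * (h ⟪w, x i⟫ - h 0)) ≤ P (fun i => !(σ i)) := by
      have hneg : -(∑ i, sgn (σ i) * (h ⟪w, x i⟫ - h 0))
          = ∑ i, sgn (!(σ i)) * (h ⟪w, x i⟫ - h 0) := by
        rw [← Finset.sum_neg_distrib]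
        exact Finset.sum_congr rfl fun i _ => by rw [sgn_not]; ring
      rw [hneg]
      exact le_csSup (hbP _) ⟨w, hw, rfl⟩
    have := hPnn σ
    have := hPnn (fun i => !(σ i))
    rw [abs_le]
    constructor <;> [linarith; linarith]
  -- sum over σ of step (c)
  have hsumC : ∑ σ : Fin n → Bool, G σ ≤ 2 * ∑ σ : Fin n → Bool, P σ := by
    have hinv : Function.Involutive (fun σ : Fin n → Bool => fun i => !(σ i)) := by
      intro σ; funext i; simp
    have hre : ∑ σ : Fin n → Bool, P (fun i => !(σ i)) = ∑ σ : Fin n → Bool, P σ :=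
      Fintype.sum_bijective _ hinv.bijective (fun σ => P (fun i => !(σ i))) P (fun σ => rfl)
    calc ∑ σ : Fin n → Bool, G σ
        ≤ ∑ σ : Fin n → Bool, (P σ + P (fun i => !(σ i))) :=
          Finset.sum_le_sum fun σ _ => hstepC σ
      _ = 2 * ∑ σ : Fin n → Bool, P σ := by
          rw [Finset.sum_add_distrib, hre]; ring
  -- Step (d): contraction
  have hstepD : ∑ σ : Fin n → Bool, P σ ≤ ∑ σ : Fin n → Bool, Q σ := by
    exact contraction hK0 (fun i w => h ⟪w, x i⟫ - h 0) (fun i w => L * ⟪w, x i⟫)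
      (L * (C3 * C1)) hg_bd ht_bd
      (fun i w hw w' hw' => by
        calc |(h ⟪w, x i⟫ - h 0) - (h ⟪w', x i⟫ - h 0)| = |h ⟪w, x i⟫ - h ⟪w', x i⟫| := by
              ring_nf
          _ ≤ L * |⟪w, x i⟫ - ⟪w', x i⟫| := hLR _ _
          _ = |L * ⟪w, x i⟫ - L * ⟪w', x i⟫| := by
              rw [← mul_sub, abs_mul, abs_of_pos hL])
  -- Step (e)
  have hstepE : ∀ σ : Fin n → Bool, Q σ ≤ L * C3 * N σ := by
    intro σ
    apply csSup_le (Set.Nonempty.image _ ⟨0, hK0⟩)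
    rintro r ⟨w, hw, rfl⟩
    dsimp only
    have hid : ∑ i, sgn (σ i) * (L * ⟪w, x i⟫) = L * ⟪w, ∑ i, sgn (σ i) • x i⟫ := by
      rw [inner_sum, Finset.mul_sum]
      exact Finset.sum_congr rfl fun i _ => by rw [real_inner_smul_right]; ring
    rw [hid, hNdef]
    calc L * ⟪w, ∑ i, sgn (σ i) • x i⟫ ≤ L * (‖w‖ * ‖∑ i, sgn (σ i) • x i‖) :=
          mul_le_mul_of_nonneg_left (real_inner_le_norm _ _) hL.le
      _ ≤ L * (C3 * ‖∑ i, sgn (σ i) • x i‖) := by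
          refine mul_le_mul_of_nonneg_left ?_ hL.le
          exact mul_le_mul_of_nonneg_right (hKnorm w hw) (norm_nonneg _)
      _ = L * C3 * ‖∑ i, sgn (σ i) • x i‖ := by ring
  -- Step (f)
  have hstepF : ∑ σ : Fin n → Bool, N σ ≤ 2 ^ n * C1 * Real.sqrt n :=
    sum_norm_sgn_le x C1 hC1.le hx
  -- Step (g)
  have hstepG : ∑ σ : Fin n → Bool, T σ ≤ 2 ^ n * 1 * Real.sqrt n := by
    have := sum_norm_sgn_le (fun _ : Fin n => (1:ℝ)) 1 zero_le_one (fun i => by simp)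
    calc ∑ σ : Fin n → Bool, T σ = ∑ σ : Fin n → Bool, ‖∑ i, sgn (σ i) • (1:ℝ)‖ := by
          refine Finset.sum_congr rfl fun σ _ => ?_
          rw [hTdef]
          simp [Real.norm_eq_abs, smul_eq_mul]
      _ ≤ 2 ^ n * 1 * Real.sqrt n := this
  -- assemble
  have hsumB : ∑ σ : Fin n → Bool, B σ
      ≤ 2 * (L * C3 * (2 ^ n * C1 * Real.sqrt n)) + |h 0| * (2 ^ n * 1 * Real.sqrt n) := by
    calc ∑ σ : Fin n → Bool, B σ
        ≤ ∑ σ : Fin n → Bool, (G σ + |h 0| * T σ) := Finset.sum_le_sum fun σ _ => hstepB σ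
      _ = (∑ σ : Fin n → Bool, G σ) + |h 0| * ∑ σ : Fin n → Bool, T σ := by
          rw [Finset.sum_add_distrib, Finset.mul_sum]
      _ ≤ 2 * ∑ σ : Fin n → Bool, P σ + |h 0| * (2 ^ n * 1 * Real.sqrt n) := by
          refine add_le_add hsumC (mul_le_mul_of_nonneg_left hstepG (abs_nonneg _))
      _ ≤ 2 * ∑ σ : Fin n → Bool, Q σ + |h 0| * (2 ^ n * 1 * Real.sqrt n) := by
          have := hstepD; linarith
      _ ≤ 2 * (L * C3 * (2 ^ n * C1 * Real.sqrt n)) + |h 0| * (2 ^ n * 1 * Real.sqrt n) := by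
          have hq : ∑ σ : Fin n → Bool, Q σ ≤ L * C3 * (2 ^ n * C1 * Real.sqrt n) := by
            calc ∑ σ : Fin n → Bool, Q σ ≤ ∑ σ : Fin n → Bool, L * C3 * N σ :=
                  Finset.sum_le_sum fun σ _ => hstepE σ
              _ = L * C3 * ∑ σ : Fin n → Bool, N σ := by rw [Finset.mul_sum]
              _ ≤ L * C3 * (2 ^ n * C1 * Real.sqrt n) :=
                  mul_le_mul_of_nonneg_left hstepF (by positivity)
          linarith
  -- final computation
  rw [radEmp]
  have hif : ∀ (σ : Fin n → Bool) (i : Fin n), (if σ i then (1:ℝ) else -1) = sgn (σ i) :=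
    fun σ i => rfl
  simp only [hif]
  have hsumS : ∑ σ : Fin n → Bool,
      sSup {r : ℝ | ∃ f ∈ {f | ∃ (α : EuclideanSpace ℝ (Fin m))
          (w : Fin m → EuclideanSpace ℝ (Fin d)), ‖α‖ ≤ C4 ∧ (∀ j, ‖w j‖ ≤ C3)
          ∧ f = fun y => ∑ j, α j * h ⟪w j, y⟫},
        r = (n : ℝ)⁻¹ * ∑ i, sgn (σ i) * f (x i)}
      ≤ (n : ℝ)⁻¹ * (C4 * (Real.sqrt m
          * (2 * (L * C3 * (2 ^ n * C1 * Real.sqrt n)) + |h 0| * (2 ^ n * 1 * Real.sqrt n)))) := by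
    calc ∑ σ : Fin n → Bool, sSup {r : ℝ | ∃ f ∈ {f | ∃ (α : EuclideanSpace ℝ (Fin m))
          (w : Fin m → EuclideanSpace ℝ (Fin d)), ‖α‖ ≤ C4 ∧ (∀ j, ‖w j‖ ≤ C3)
          ∧ f = fun y => ∑ j, α j * h ⟪w j, y⟫},
        r = (n : ℝ)⁻¹ * ∑ i, sgn (σ i) * f (x i)}
        ≤ ∑ σ : Fin n → Bool, (n : ℝ)⁻¹ * (C4 * (Real.sqrt m * B σ)) :=
          Finset.sum_le_sum fun σ _ => hstepA σ
      _ = (n : ℝ)⁻¹ * (C4 * (Real.sqrt m * ∑ σ : Fin n → Bool, B σ)) := by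
          rw [← Finset.mul_sum, ← Finset.mul_sum, ← Finset.mul_sum]
      _ ≤ (n : ℝ)⁻¹ * (C4 * (Real.sqrt m
          * (2 * (L * C3 * (2 ^ n * C1 * Real.sqrt n)) + |h 0| * (2 ^ n * 1 * Real.sqrt n)))) := by
          refine mul_le_mul_of_nonneg_left ?_ (by positivity)
          refine mul_le_mul_of_nonneg_left ?_ hC4.le
          exact mul_le_mul_of_nonneg_left hsumB (Real.sqrt_nonneg _)
  have hfinal : ((2:ℝ) ^ n)⁻¹ * ((n : ℝ)⁻¹ * (C4 * (Real.sqrt m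
          * (2 * (L * C3 * (2 ^ n * C1 * Real.sqrt n)) + |h 0| * (2 ^ n * 1 * Real.sqrt n)))))
      = 2 * L * C1 * C3 * C4 * Real.sqrt m / Real.sqrt n
        + C4 * |h 0| * Real.sqrt m / Real.sqrt n := by
    have h2n : ((2:ℝ) ^ n) ≠ 0 := by positivity
    have hsn : Real.sqrt n ≠ 0 := by
      have : (0:ℝ) < n := by exact_mod_cast hn
      positivity
    have hnn : (n:ℝ) = Real.sqrt n * Real.sqrt n := (Real.mul_self_sqrt (Nat.cast_nonneg n)).symm
    generalize hs : Real.sqrt (n:ℝ) = sq at hsn hnn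
    rw [hnn]
    field_simp
  calc ((2:ℝ) ^ n)⁻¹ * ∑ σ : Fin n → Bool,
      sSup {r : ℝ | ∃ f ∈ {f | ∃ (α : EuclideanSpace ℝ (Fin m))
          (w : Fin m → EuclideanSpace ℝ (Fin d)), ‖α‖ ≤ C4 ∧ (∀ j, ‖w j‖ ≤ C3)
          ∧ f = fun y => ∑ j, α j * h ⟪w j, y⟫},
        r = (n : ℝ)⁻¹ * ∑ i, sgn (σ i) * f (x i)}
      ≤ ((2:ℝ) ^ n)⁻¹ * ((n : ℝ)⁻¹ * (C4 * (Real.sqrt m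
          * (2 * (L * C3 * (2 ^ n * C1 * Real.sqrt n)) + |h 0| * (2 ^ n * 1 * Real.sqrt n))))) :=
        mul_le_mul_of_nonneg_left hsumS (by positivity)
    _ = _ := hfinal
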